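/- If T is a random variable with MOKw-G survival function S(t) = α(1-G(t)^a)^b/(1-(1-α)(1-G(t)^a)^b), then E[(1-(1-α)(1-G(T)^a)^b)^v] = -α log α/(1-α) when v = 1, and = α(1-α^{v-1})/((1-α)(v-1)) for integer v ≥ 2, provided 0 < α and α ≠ 1. -/

import Mathlib

open MeasureTheory Set Filter



theorem mokw_aux (α a b : ℝ) (G g : ℝ → ℝ) (hα : 0 < α)
    (ha : 0 < a) (hb : 0 < b) (hG : ∀ t, HasDerivAt G (g t) t)
    (hg : ∀ t, 0 ≤ g t) (hG01 : ∀ t, G t ∈ Set.Icc (0:ℝ) 1)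
    (v : ℕ) (F : ℝ → ℝ) (A B : ℝ)
    (hFc : Continuous F)
    (hFφ : ∀ s t : ℝ, 1 - (1 - α) * (1 - G s ^ a) ^ b = 1 - (1 - α) * (1 - G t ^ a) ^ b → F s = F t)
    (hFd : ∀ t, 0 < G t → G t < 1 → HasDerivAt F
      ((1 - (1 - α) * (1 - G t ^ a) ^ b) ^ v *
        (α * a * b * g t * G t ^ (a - 1) * (1 - G t ^ a) ^ (b - 1) /
          (1 - (1 - α) * (1 - G t ^ a) ^ b) ^ 2)) t)
    (hA : Tendsto F atBot (nhds A)) (hB : Tendsto F atTop (nhds B)) :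
    (∫ t : ℝ, (1 - (1 - α) * (1 - G t ^ a) ^ b) ^ v *
        (α * a * b * g t * G t ^ (a - 1) * (1 - G t ^ a) ^ (b - 1) /
          (1 - (1 - α) * (1 - G t ^ a) ^ b) ^ 2)) = B - A := by
  set φ : ℝ → ℝ := fun t => 1 - (1 - α) * (1 - G t ^ a) ^ b with hφdef
  set f : ℝ → ℝ := fun t => φ t ^ v *
      (α * a * b * g t * G t ^ (a - 1) * (1 - G t ^ a) ^ (b - 1) / φ t ^ 2) with hfdef
  have hGmono : Monotone G := by
    refine monotone_of_deriv_nonneg (fun t => (hG t).differentiableAt) (fun t => ?_)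
    rw [(hG t).deriv]; exact hg t
  have hGa1 : ∀ t, G t ^ a ≤ 1 := fun t =>
    Real.rpow_le_one (hG01 t).1 (hG01 t).2 ha.le
  have hφpos : ∀ t, 0 < φ t := by
    intro t
    have hs0 : 0 ≤ (1 - G t ^ a) ^ b := Real.rpow_nonneg (by linarith [hGa1 t]) b
    have hs1 : (1 - G t ^ a) ^ b ≤ 1 :=
      Real.rpow_le_one (by linarith [hGa1 t])
        (by linarith [Real.rpow_nonneg (hG01 t).1 a]) hb.le
    rcases eq_or_lt_of_le hs1 with h | h
    · simp only [hφdef, h]; linarith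
    · have := mul_nonneg hα.le hs0
      simp only [hφdef]; nlinarith
  have hfnn : ∀ t, 0 ≤ f t := by
    intro t
    have h1 : 0 ≤ G t ^ (a - 1) := Real.rpow_nonneg (hG01 t).1 _
    have h2 : 0 ≤ (1 - G t ^ a) ^ (b - 1) := Real.rpow_nonneg (by linarith [hGa1 t]) _
    have : 0 ≤ α * a * b * g t * G t ^ (a - 1) * (1 - G t ^ a) ^ (b - 1) := by
      have := hg t; positivity
    exact mul_nonneg (pow_nonneg (hφpos t).le v) (div_nonneg this (by positivity))
  have hf0 : ∀ t, G t = 0 ∨ G t = 1 → f t = 0 := by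
    intro t ht
    have hgt : g t = 0 := by
      rcases ht with h | h
      · have hmin : IsLocalMin G t :=
          Filter.Eventually.of_forall fun y => by rw [h]; exact (hG01 y).1
        exact hmin.hasDerivAt_eq_zero (hG t)
      · have hmax : IsLocalMax G t :=
          Filter.Eventually.of_forall fun y => by rw [h]; exact (hG01 y).2
        exact hmax.hasDerivAt_eq_zero (hG t)
    simp [hfdef, hgt]
  -- the "good" piece lemma
  have good : ∀ x y : ℝ, x ≤ y → (∀ t ∈ Ioo x y, 0 < G t ∧ G t < 1) →
      IntegrableOn f (Ioc x y) ∧ (∫ t in x..y, f t) = F y - F x := by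
    intro x y hxy h
    have hd : ∀ t ∈ Ioo x y, HasDerivWithinAt F (f t) (Ioi t) t := fun t ht =>
      (hFd t (h t ht).1 (h t ht).2).hasDerivWithinAt
    have hint : IntegrableOn f (Ioc x y) :=
      intervalIntegral.integrableOn_deriv_right_of_nonneg hFc.continuousOn hd
        (fun t _ => hfnn t)
    exact ⟨hint, intervalIntegral.integral_eq_sub_of_hasDeriv_right_of_le hxy
      hFc.continuousOn hd ((intervalIntegrable_iff_integrableOn_Ioc_of_le hxy).2 hint)⟩
  -- flat pieces
  have flat0 : ∀ x y : ℝ, x ≤ y → G y = 0 →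
      IntegrableOn f (Ioc x y) ∧ (∫ t in x..y, f t) = F y - F x := by
    intro x y hxy hy
    have hz : ∀ t ∈ Icc x y, f t = 0 := fun t ht =>
      hf0 t (Or.inl (le_antisymm (hy ▸ hGmono ht.2) (hG01 t).1))
    have hFxy : F y = F x := by
      apply hFφ
      have hx0 : G x = 0 := le_antisymm (hy ▸ hGmono hxy) (hG01 x).1
      rw [hy, hx0]
    constructor
    · exact (integrableOn_congr_fun (fun t ht => hz t (Ioc_subset_Icc_self ht))
        measurableSet_Ioc).2 (integrableOn_zero)
    · rw [intervalIntegral.integral_congr (g := fun _ => (0:ℝ))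
        (by rw [Set.uIcc_of_le hxy]; exact fun t ht => hz t ht)]
      simp [hFxy]
  have flat1 : ∀ x y : ℝ, x ≤ y → G x = 1 →
      IntegrableOn f (Ioc x y) ∧ (∫ t in x..y, f t) = F y - F x := by
    intro x y hxy hx
    have hz : ∀ t ∈ Icc x y, f t = 0 := fun t ht =>
      hf0 t (Or.inr (le_antisymm (hG01 t).2 (hx ▸ hGmono ht.1)))
    have hFxy : F y = F x := by
      apply hFφ
      have hy1 : G y = 1 := le_antisymm (hG01 y).2 (hx ▸ hGmono hxy)
      rw [hy1, hx]
    constructor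
    · exact (integrableOn_congr_fun (fun t ht => hz t (Ioc_subset_Icc_self ht))
        measurableSet_Ioc).2 (integrableOn_zero)
    · rw [intervalIntegral.integral_congr (g := fun _ => (0:ℝ))
        (by rw [Set.uIcc_of_le hxy]; exact fun t ht => hz t ht)]
      simp [hFxy]
  -- master piecewise lemma
  have master : ∀ x y : ℝ, x ≤ y →
      IntegrableOn f (Ioc x y) ∧ (∫ t in x..y, f t) = F y - F x := by
    intro x y hxy
    set S0 : Set ℝ := (Icc x y ∩ G ⁻¹' {0}) ∪ {x} with hS0def
    set S1 : Set ℝ := (Icc x y ∩ G ⁻¹' {1}) ∪ {y} with hS1def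
    have hGcont : Continuous G := continuous_iff_continuousAt.2 fun t => (hG t).continuousAt
    have hS0closed : IsClosed S0 :=
      ((isClosed_Icc.inter (isClosed_singleton.preimage hGcont)).union isClosed_singleton)
    have hS1closed : IsClosed S1 :=
      ((isClosed_Icc.inter (isClosed_singleton.preimage hGcont)).union isClosed_singleton)
    have hS0ne : S0.Nonempty := ⟨x, Or.inr rfl⟩
    have hS1ne : S1.Nonempty := ⟨y, Or.inr rfl⟩
    have hS0bdd : BddAbove S0 := by
      refine ⟨y, fun t ht => ?_⟩
      rcases ht with ⟨h1, _⟩ | h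
      · exact h1.2
      · rw [Set.mem_singleton_iff] at h; rw [h]; exact hxy
    have hS1bdd : BddBelow S1 := by
      refine ⟨x, fun t ht => ?_⟩
      rcases ht with ⟨h1, _⟩ | h
      · exact h1.1
      · rw [Set.mem_singleton_iff] at h; rw [h]; exact hxy
    set c := sSup S0 with hcdef
    set d := sInf S1 with hddef
    have hcS : c ∈ S0 := hS0closed.csSup_mem hS0ne hS0bdd
    have hdS : d ∈ S1 := hS1closed.csInf_mem hS1ne hS1bdd
    have hxc : x ≤ c := le_csSup hS0bdd (Or.inr rfl)
    have hdy : d ≤ y := csInf_le hS1bdd (Or.inr rfl)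
    have hcy : c ≤ y := by
      refine csSup_le hS0ne fun t ht => ?_
      rcases ht with ⟨h1, _⟩ | h
      · exact h1.2
      · rw [Set.mem_singleton_iff] at h; rw [h]; exact hxy
    have hxd : x ≤ d := by
      refine le_csInf hS1ne fun t ht => ?_
      rcases ht with ⟨h1, _⟩ | h
      · exact h1.1
      · rw [Set.mem_singleton_iff] at h; rw [h]; exact hxy
    have hGc : G c = 0 ∨ c = x := by
      rcases hcS with ⟨_, h⟩ | h
      · exact Or.inl h
      · exact Or.inr h
    have hGd : G d = 1 ∨ d = y := by
      rcases hdS with ⟨_, h⟩ | h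
      · exact Or.inl h
      · exact Or.inr h
    have hcd : c ≤ d := by
      by_contra hlt
      push_neg at hlt
      rcases hGc with hc0 | hcx
      · rcases hGd with hd1 | hdy'
        · have := hGmono hlt.le
          rw [hc0, hd1] at this; linarith
        · rw [hdy'] at hlt; exact absurd hcy (not_le.2 hlt)
      · rw [hcx] at hlt; exact absurd hxd (not_le.2 hlt)
    -- the three pieces
    have p1 : IntegrableOn f (Ioc x c) ∧ (∫ t in x..c, f t) = F c - F x := by
      rcases hGc with h | hcx
      · exact flat0 x c hxc h
      · rw [hcx]; refine ⟨by simp, by simp⟩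
    have p3 : IntegrableOn f (Ioc d y) ∧ (∫ t in d..y, f t) = F y - F d := by
      rcases hGd with h | hdy'
      · exact flat1 d y hdy h
      · rw [hdy']; refine ⟨by simp, by simp⟩
    have p2 : IntegrableOn f (Ioc c d) ∧ (∫ t in c..d, f t) = F d - F c := by
      refine good c d hcd fun t ht => ⟨?_, ?_⟩
      · rcases (hG01 t).1.lt_or_eq with h | h
        · exact h
        · exfalso
          have htS : t ∈ S0 := Or.inl ⟨⟨hxc.trans ht.1.le, ht.2.le.trans hdy⟩, h.symm⟩
          exact absurd (le_csSup hS0bdd htS) (not_le.2 ht.1)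
      · rcases (hG01 t).2.eq_or_lt with h | h
        · exfalso
          have htS : t ∈ S1 := Or.inl ⟨⟨hxc.trans ht.1.le, ht.2.le.trans hdy⟩, h⟩
          exact absurd (csInf_le hS1bdd htS) (not_le.2 ht.2)
        · exact h
    have i1 : IntervalIntegrable f volume x c :=
      (intervalIntegrable_iff_integrableOn_Ioc_of_le hxc).2 p1.1
    have i2 : IntervalIntegrable f volume c d :=
      (intervalIntegrable_iff_integrableOn_Ioc_of_le hcd).2 p2.1
    have i3 : IntervalIntegrable f volume d y :=
      (intervalIntegrable_iff_integrableOn_Ioc_of_le hdy).2 p3.1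
    constructor
    · rw [← Set.Ioc_union_Ioc_eq_Ioc hxc hcy, ← Set.Ioc_union_Ioc_eq_Ioc hcd hdy]
      exact p1.1.union (p2.1.union p3.1)
    · rw [← intervalIntegral.integral_add_adjacent_intervals (i1.trans i2) i3,
        ← intervalIntegral.integral_add_adjacent_intervals i1 i2,
        p1.2, p2.2, p3.2]
      ring
  -- monotonicity of F
  have hFmono : Monotone F := by
    intro x y hxy
    have h := (master x y hxy).2
    have hnn : 0 ≤ ∫ t in x..y, f t := by
      rw [intervalIntegral.integral_of_le hxy]
      exact setIntegral_nonneg measurableSet_Ioc fun t _ => hfnn t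
    linarith [h ▸ hnn]
  have hFleB : ∀ t, F t ≤ B := fun t => hFmono.ge_of_tendsto hB t
  have hAleF : ∀ t, A ≤ F t := fun t => hFmono.le_of_tendsto hA t
  have hneg : Tendsto (fun n : ℕ => -(n : ℝ)) atTop atBot :=
    tendsto_neg_atBot_iff.mpr tendsto_natCast_atTop_atTop
  have hpos : Tendsto (fun n : ℕ => (n : ℝ)) atTop atTop := tendsto_natCast_atTop_atTop
  have hfi : Integrable f := by
    refine integrable_of_intervalIntegral_norm_bounded (B - A)
      (fun n : ℕ => (master _ _ (neg_le_self n.cast_nonneg : -(n:ℝ) ≤ (n:ℝ))).1) hneg hpos ?_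
    refine Filter.Eventually.of_forall fun n => ?_
    have heq : (∫ t in -(n:ℝ)..(n:ℝ), ‖f t‖) = ∫ t in -(n:ℝ)..(n:ℝ), f t := by
      refine intervalIntegral.integral_congr fun t _ => ?_
      exact Real.norm_of_nonneg (hfnn t)
    rw [heq, (master _ _ (neg_le_self n.cast_nonneg : -(n:ℝ) ≤ (n:ℝ))).2]
    have := hFleB (n : ℝ)
    have := hAleF (-(n:ℝ))
    linarith
  have h1 : Tendsto (fun n : ℕ => ∫ t in -(n:ℝ)..(n:ℝ), f t) atTop (nhds (∫ t, f t)) :=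
    intervalIntegral_tendsto_integral hfi hneg hpos
  have h2 : Tendsto (fun n : ℕ => ∫ t in -(n:ℝ)..(n:ℝ), f t) atTop (nhds (B - A)) := by
    have heq : (fun n : ℕ => ∫ t in -(n:ℝ)..(n:ℝ), f t) =
        fun n : ℕ => F (n:ℝ) - F (-(n:ℝ)) := by
      funext n
      exact (master _ _ (neg_le_self n.cast_nonneg : -(n:ℝ) ≤ (n:ℝ))).2
    rw [heq]
    exact ((hB.comp hpos).sub (hA.comp hneg))
  exact tendsto_nhds_unique h1 h2


theorem stmt_10 (α a b : ℝ) (G g : ℝ → ℝ) (hα : 0 < α) (hα1 : α ≠ 1)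
    (ha : 0 < a) (hb : 0 < b) (hG : ∀ t, HasDerivAt G (g t) t)
    (hg : ∀ t, 0 ≤ g t) (hG01 : ∀ t, G t ∈ Set.Icc (0:ℝ) 1)
    (hbot : Filter.Tendsto G Filter.atBot (nhds 0))
    (htop : Filter.Tendsto G Filter.atTop (nhds 1)) :
    (∫ t : ℝ, (1 - (1 - α) * (1 - G t ^ a) ^ b) *
        (α * a * b * g t * G t ^ (a - 1) * (1 - G t ^ a) ^ (b - 1) /
          (1 - (1 - α) * (1 - G t ^ a) ^ b) ^ 2)) =
      -α * Real.log α / (1 - α) ∧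
    ∀ v : ℕ, 2 ≤ v →
      (∫ t : ℝ, (1 - (1 - α) * (1 - G t ^ a) ^ b) ^ (v : ℕ) *
          (α * a * b * g t * G t ^ (a - 1) * (1 - G t ^ a) ^ (b - 1) /
            (1 - (1 - α) * (1 - G t ^ a) ^ b) ^ 2)) =
        α * (1 - α ^ ((v : ℝ) - 1)) / ((1 - α) * ((v : ℝ) - 1)) := by
  have h1α : (1:ℝ) - α ≠ 0 := sub_ne_zero_of_ne (Ne.symm hα1)
  have hGa1 : ∀ t, G t ^ a ≤ 1 := fun t =>
    Real.rpow_le_one (hG01 t).1 (hG01 t).2 ha.le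
  set φ : ℝ → ℝ := fun t => 1 - (1 - α) * (1 - G t ^ a) ^ b with hφdef
  have hφpos : ∀ t, 0 < φ t := by
    intro t
    have hs0 : 0 ≤ (1 - G t ^ a) ^ b := Real.rpow_nonneg (by linarith [hGa1 t]) b
    have hs1 : (1 - G t ^ a) ^ b ≤ 1 :=
      Real.rpow_le_one (by linarith [hGa1 t])
        (by linarith [Real.rpow_nonneg (hG01 t).1 a]) hb.le
    rcases eq_or_lt_of_le hs1 with h | h
    · simp only [hφdef, h]; linarith
    · have := mul_nonneg hα.le hs0
      simp only [hφdef]; nlinarith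
  have hφcont : Continuous φ := by
    have hGcont : Continuous G := continuous_iff_continuousAt.2 fun t => (hG t).continuousAt
    have h1 : Continuous fun t => G t ^ a :=
      hGcont.rpow_const fun t => Or.inr ha.le
    have h2 : Continuous fun t => (1 - G t ^ a) ^ b :=
      (continuous_const.sub h1).rpow_const fun t => Or.inr hb.le
    exact continuous_const.sub (continuous_const.mul h2)
  -- derivative of φ at good points
  have hφder : ∀ t, 0 < G t → G t < 1 → HasDerivAt φ
      ((1 - α) * (a * b * g t * G t ^ (a - 1) * (1 - G t ^ a) ^ (b - 1))) t := by
    intro t h0 h1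
    have hne1 : (1:ℝ) - G t ^ a ≠ 0 := by
      have : G t ^ a < 1 := Real.rpow_lt_one (hG01 t).1 h1 ha
      linarith
    have d1 : HasDerivAt (fun u => G u ^ a) (g t * a * G t ^ (a - 1)) t :=
      (hG t).rpow_const (Or.inl h0.ne')
    have d2 : HasDerivAt (fun u => 1 - G u ^ a) (-(g t * a * G t ^ (a - 1))) t := by
      exact ((hasDerivAt_const t (1:ℝ)).sub d1).congr_deriv (by ring)
    have d3 : HasDerivAt (fun u => (1 - G u ^ a) ^ b)
        (-(g t * a * G t ^ (a - 1)) * b * (1 - G t ^ a) ^ (b - 1)) t :=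
      d2.rpow_const (Or.inl hne1)
    have d4 : HasDerivAt φ
        (0 - (1 - α) * (-(g t * a * G t ^ (a - 1)) * b * (1 - G t ^ a) ^ (b - 1))) t :=
      (hasDerivAt_const t (1:ℝ)).sub (d3.const_mul (1 - α))
    convert d4 using 1
    ring
  -- limits of φ
  have hφbot : Tendsto φ atBot (nhds α) := by
    have h1 : Tendsto (fun t => G t ^ a) atBot (nhds 0) := by
      have hc : ContinuousAt (fun x : ℝ => x ^ a) 0 :=
        Real.continuousAt_rpow_const 0 a (Or.inr ha.le)
      have h := hc.tendsto.comp hbot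
      simpa [Real.zero_rpow ha.ne', Function.comp_def] using h
    have h1' : Tendsto (fun t => 1 - G t ^ a) atBot (nhds 1) := by
      simpa using tendsto_const_nhds.sub h1
    have h2 : Tendsto (fun t => (1 - G t ^ a) ^ b) atBot (nhds 1) := by
      have hc : ContinuousAt (fun x : ℝ => x ^ b) 1 :=
        Real.continuousAt_rpow_const 1 b (Or.inl one_ne_zero)
      have h := hc.tendsto.comp h1'
      simpa [Real.one_rpow, Function.comp_def] using h
    have h3 : Tendsto φ atBot (nhds (1 - (1 - α) * 1)) :=
      tendsto_const_nhds.sub (h2.const_mul (1 - α))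
    convert h3 using 2
    ring
  have hφtop : Tendsto φ atTop (nhds 1) := by
    have h1 : Tendsto (fun t => G t ^ a) atTop (nhds 1) := by
      have hc : ContinuousAt (fun x : ℝ => x ^ a) 1 :=
        Real.continuousAt_rpow_const 1 a (Or.inl one_ne_zero)
      have h := hc.tendsto.comp htop
      simpa [Real.one_rpow, Function.comp_def] using h
    have h1' : Tendsto (fun t => 1 - G t ^ a) atTop (nhds (1 - 1)) := by
      exact tendsto_const_nhds.sub h1
    rw [sub_self] at h1'
    have h2 : Tendsto (fun t => (1 - G t ^ a) ^ b) atTop (nhds 0) := by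
      have hc : ContinuousAt (fun x : ℝ => x ^ b) 0 :=
        Real.continuousAt_rpow_const 0 b (Or.inr hb.le)
      have h := hc.tendsto.comp h1'
      simpa [Real.zero_rpow hb.ne', Function.comp_def] using h
    have h3 : Tendsto φ atTop (nhds (1 - (1 - α) * 0)) :=
      tendsto_const_nhds.sub (h2.const_mul (1 - α))
    convert h3 using 2
    ring
  constructor
  · -- v = 1 case
    have key := mokw_aux α a b G g hα ha hb hG hg hG01 1
      (fun t => α / (1 - α) * Real.log (φ t))
      (α / (1 - α) * Real.log α) (α / (1 - α) * Real.log 1)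
      (continuous_const.mul (hφcont.log fun t => (hφpos t).ne'))
      (fun s t h => by simp only [hφdef] at h ⊢; rw [h])
      (fun t h0 h1 => by
        have hd := ((hφder t h0 h1).log (hφpos t).ne').const_mul (α / (1 - α))
        have hφne : 1 - (1 - α) * (1 - G t ^ a) ^ b ≠ 0 := (hφpos t).ne'
        refine hd.congr_deriv ?_
        simp only [hφdef]
        rw [pow_one]
        field_simp)
      (((Real.continuousAt_log hα.ne').tendsto.comp hφbot).const_mul (α / (1 - α)))
      (((Real.continuousAt_log one_ne_zero).tendsto.comp hφtop).const_mul (α / (1 - α)))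
    rw [show (∫ t : ℝ, (1 - (1 - α) * (1 - G t ^ a) ^ b) *
        (α * a * b * g t * G t ^ (a - 1) * (1 - G t ^ a) ^ (b - 1) /
          (1 - (1 - α) * (1 - G t ^ a) ^ b) ^ 2)) =
      ∫ t : ℝ, (1 - (1 - α) * (1 - G t ^ a) ^ b) ^ 1 *
        (α * a * b * g t * G t ^ (a - 1) * (1 - G t ^ a) ^ (b - 1) /
          (1 - (1 - α) * (1 - G t ^ a) ^ b) ^ 2) from by simp, key]
    rw [Real.log_one]
    field_simp
    ring
  · -- v ≥ 2 case
    intro v hv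
    obtain ⟨k, rfl⟩ := Nat.exists_eq_add_of_le hv
    have hk1 : ((k:ℝ) + 1) ≠ 0 := by positivity
    have key := mokw_aux α a b G g hα ha hb hG hg hG01 (2 + k)
      (fun t => α / ((1 - α) * ((k:ℝ) + 1)) * φ t ^ (k + 1))
      (α / ((1 - α) * ((k:ℝ) + 1)) * α ^ (k + 1))
      (α / ((1 - α) * ((k:ℝ) + 1)) * 1 ^ (k + 1))
      (continuous_const.mul (hφcont.pow (k + 1)))
      (fun s t h => by simp only [hφdef] at h ⊢; rw [h])
      (fun t h0 h1 => by
        have hd := ((hφder t h0 h1).pow (k + 1)).const_mul (α / ((1 - α) * ((k:ℝ) + 1)))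
        refine hd.congr_deriv ?_
        have hφne : 1 - (1 - α) * (1 - G t ^ a) ^ b ≠ 0 := (hφpos t).ne'
        simp only [hφdef]
        rw [Nat.add_sub_cancel]
        push_cast
        field_simp
        ring)
      (((continuous_pow (k + 1)).tendsto α).comp hφbot |>.const_mul _)
      (((continuous_pow (k + 1)).tendsto 1).comp hφtop |>.const_mul _)
    rw [key]
    have hcast : ((2 + k : ℕ) : ℝ) - 1 = ((k + 1 : ℕ) : ℝ) := by push_cast; ring
    rw [hcast, Real.rpow_natCast]
    rw [one_pow]
    push_cast
    field_simp
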